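/- If a conjunction ⋀Ψ (a delayed formula of HML_srbb) distinguishes a process p from a nonempty set Q (with respect to ⟦·⟧^ε), then expr^ε(⋀Ψ) ∈ Win_a((p,Q)_d) in the weak spectroscopy energy game G△. -/

import Mathlib

open Classical

noncomputable section

namespace Spectroscopy

/-! ### Energies and declining energy games -/

/-- Energies: 8-dimensional vectors over `ℕ ∪ {∞}`, ordered componentwise. -/
abbrev Energy : Type := Fin 8 → ℕ∞

/-- The `i`-th unit vector. -/
def unitE (i : Fin 8) : Energy := fun k => if k = i then 1 else 0

/-- The vector with value `v` at position `i` and `0` elsewhere. -/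
def onlyAt (i : Fin 8) (v : ℕ∞) : Energy := fun k => if k = i then v else 0

/-- Components of energy updates: `-1`, `0`, or minimum selection `min_D`.
For the component at position `k`, `minWith D` selects the minimum over the
positions `{k} ∪ D`, so the requirement `k ∈ D` of the paper holds by
construction. -/
inductive UpdComp : Type
  | decr : UpdComp
  | zero : UpdComp
  | minWith (D : Finset (Fin 8)) : UpdComp
deriving DecidableEq

/-- Energy updates. -/
abbrev Update : Type := Fin 8 → UpdComp

/-- Partial application of an update to an energy (`none` when a component
would become negative). -/
def upd (e : Energy) (u : Update) : Option Energy :=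
  if ∀ k, u k = UpdComp.decr → e k ≠ 0 then
    some (fun k =>
      match u k with
      | UpdComp.decr => e k - 1
      | UpdComp.zero => e k
      | UpdComp.minWith D => (insert k D).inf e)
  else none

/-- A declining energy game: positions, a defender predicate (attacker
positions are the non-defender ones), and moves labeled with updates. -/
structure EGame (Pos : Type) where
  defender : Pos → Prop
  move : Pos → Update → Pos → Prop

/-- Attacker winning budgets `Win_a`: at an attacker position some move must
lead to an attacker-won position under the updated energy; at a defender
position every move must (be defined and) lead to an attacker-won position. -/
inductive EGame.Win {Pos : Type} (G : EGame Pos) : Pos → Energy → Prop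
  | attack {g : Pos} {u : Update} {g' : Pos} {e e' : Energy} :
      ¬ G.defender g → G.move g u g' → upd e u = some e' → G.Win g' e' →
      G.Win g e
  | defend {g : Pos} {e : Energy} :
      G.defender g →
      (∀ u g', G.move g u g' → upd e u ≠ none) →
      (∀ u g' e', G.move g u g' → upd e u = some e' → G.Win g' e') →
      G.Win g e

/-! ### Labeled transition systems with silent steps -/

section LTS

variable {Proc Act : Type}

/-- Weak internal steps `↠`: reflexive-transitive closure of `τ`-steps. -/
def Star (Tr : Proc → Act → Proc → Prop) (τ : Act) : Proc → Proc → Prop :=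
  Relation.ReflTransGen fun p p' => Tr p τ p'

/-- A process is stable if it has no `τ`-step. -/
def Stable (Tr : Proc → Act → Proc → Prop) (τ : Act) (p : Proc) : Prop :=
  ∀ p', ¬ Tr p τ p'

/-- Optional step `p →(α) p'`: a real `α`-step, or `α = τ` and `p = p'`. -/
def OptStep (Tr : Proc → Act → Proc → Prop) (τ : Act) (p : Proc) (α : Act) (p' : Proc) : Prop :=
  Tr p α p' ∨ (α = τ ∧ p = p')

/-- Lift of `→a` to sets. -/
def SetStep (Tr : Proc → Act → Proc → Prop) (Q : Set Proc) (a : Act) (Q' : Set Proc) : Prop :=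
  Q' = {q' | ∃ q ∈ Q, Tr q a q'}

/-- Lift of `↠` to sets. -/
def SetStar (Tr : Proc → Act → Proc → Prop) (τ : Act) (Q Q' : Set Proc) : Prop :=
  Q' = {q' | ∃ q ∈ Q, Star Tr τ q q'}

/-- Lift of `→(α)` to sets. -/
def SetOpt (Tr : Proc → Act → Proc → Prop) (τ : Act) (Q : Set Proc) (α : Act)
    (Q' : Set Proc) : Prop :=
  Q' = {q' | ∃ q ∈ Q, OptStep Tr τ q α q'}

end LTS

/-! ### The logic HML_srbb -/

mutual
/-- Formulas `φ` of HML_srbb: `⟨ε⟩χ` or immediate conjunctions `⋀Ψ`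
(conjunctions are indexed by an arbitrary type). `⊤` is the empty conjunction. -/
inductive Formula (Act : Type) (τ : Act) : Type 1
  | delayed : DFormula Act τ → Formula Act τ
  | conj : (I : Type) → (I → Conjunct Act τ) → Formula Act τ

/-- Delayed formulas `χ`: observations `⟨a⟩φ` (with `a ≠ τ`), standard
conjunctions `⋀Ψ`, stable conjunctions `⋀({¬⟨τ⟩⊤} ∪ Ψ)`, and branching
conjunctions `⋀({(α)φ} ∪ Ψ)`. -/
inductive DFormula (Act : Type) (τ : Act) : Type 1
  | obs : (a : Act) → a ≠ τ → Formula Act τ → DFormula Act τ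
  | conj : (I : Type) → (I → Conjunct Act τ) → DFormula Act τ
  | stableConj : (I : Type) → (I → Conjunct Act τ) → DFormula Act τ
  | branchConj : (α : Act) → Formula Act τ → (I : Type) → (I → Conjunct Act τ) → DFormula Act τ

/-- Conjuncts `ψ`: positive `⟨ε⟩χ` or negative `¬⟨ε⟩χ`. -/
inductive Conjunct (Act : Type) (τ : Act) : Type 1
  | pos : DFormula Act τ → Conjunct Act τ
  | neg : DFormula Act τ → Conjunct Act τ
end

section Semantics

variable {Proc Act : Type}

mutual
/-- Semantics `⟦φ⟧`. -/
def Sat (Tr : Proc → Act → Proc → Prop) (τ : Act) (p : Proc) : Formula Act τ → Prop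
  | .delayed χ => ∃ p', Star Tr τ p p' ∧ SatD Tr τ p' χ
  | .conj _ ps => ∀ i, SatC Tr τ p (ps i)

/-- Semantics `⟦χ⟧^ε` of delayed formulas. -/
def SatD (Tr : Proc → Act → Proc → Prop) (τ : Act) (p : Proc) : DFormula Act τ → Prop
  | .obs a _ φ => ∃ p', Tr p a p' ∧ Sat Tr τ p' φ
  | .conj _ ps => ∀ i, SatC Tr τ p (ps i)
  | .stableConj _ ps => Stable Tr τ p ∧ ∀ i, SatC Tr τ p (ps i)
  | .branchConj α φ _ ps =>
      (∃ p', OptStep Tr τ p α p' ∧ Sat Tr τ p' φ) ∧ ∀ i, SatC Tr τ p (ps i)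

/-- Semantics `⟦ψ⟧^∧` of conjuncts. -/
def SatC (Tr : Proc → Act → Proc → Prop) (τ : Act) (p : Proc) : Conjunct Act τ → Prop
  | .pos χ => ∃ p', Star Tr τ p p' ∧ SatD Tr τ p' χ
  | .neg χ => ¬ ∃ p', Star Tr τ p p' ∧ SatD Tr τ p' χ
end

/-- `φ` distinguishes `p` from the set `Q`. -/
def Distinguishes (Tr : Proc → Act → Proc → Prop) (τ : Act) (φ : Formula Act τ)
    (p : Proc) (Q : Set Proc) : Prop :=
  Sat Tr τ p φ ∧ ∀ q ∈ Q, ¬ Sat Tr τ q φ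

/-- The delayed formula `χ` distinguishes `p` from the set `Q` w.r.t. `⟦·⟧^ε`. -/
def DistinguishesD (Tr : Proc → Act → Proc → Prop) (τ : Act) (χ : DFormula Act τ)
    (p : Proc) (Q : Set Proc) : Prop :=
  SatD Tr τ p χ ∧ ∀ q ∈ Q, ¬ SatD Tr τ q χ

/-- The conjunct `ψ` distinguishes `p` from `q` w.r.t. `⟦·⟧^∧`. -/
def DistinguishesC (Tr : Proc → Act → Proc → Prop) (τ : Act) (ψ : Conjunct Act τ)
    (p q : Proc) : Prop :=
  SatC Tr τ p ψ ∧ ¬ SatC Tr τ q ψ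

/-- Stability-respecting branching bisimulations: symmetric relations with the
branching-bisimulation transfer property and the stability-respecting
property. -/
def IsSRBBisim (Tr : Proc → Act → Proc → Prop) (τ : Act) (R : Proc → Proc → Prop) : Prop :=
  Symmetric R ∧
  (∀ p q, R p q → ∀ α p', Tr p α p' →
    (α = τ ∧ R p' q) ∨
      ∃ q' q'', Star Tr τ q q' ∧ Tr q' α q'' ∧ R p q' ∧ R p' q'') ∧
  (∀ p q, R p q → Stable Tr τ p →
    ∃ q', Star Tr τ q q' ∧ Stable Tr τ q' ∧ R p q')

end Semantics

/-! ### Expressiveness prices -/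

section Expr

variable {Act : Type} {τ : Act}

mutual
/-- Expressiveness price `expr` of formulas. -/
def exprF : Formula Act τ → Energy
  | .delayed χ => exprE χ
  | .conj I ps => ⨆ _ : Nonempty I, ((unitE 4 + unitE 2) + ⨆ i, exprC (ps i))

/-- Expressiveness price `expr^ε` of delayed formulas. -/
def exprE : DFormula Act τ → Energy
  | .obs _ _ φ => unitE 0 + exprF φ
  | .conj I ps => ⨆ _ : Nonempty I, (unitE 2 + ⨆ i, exprC (ps i))
  | .stableConj _ ps => unitE 3 + ⨆ i, exprC (ps i)
  | .branchConj _ φ _ ps =>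
      (unitE 1 + unitE 2) +
        (((unitE 0 + exprF φ) ⊔ onlyAt 5 (1 + exprF φ 0)) ⊔ ⨆ i, exprC (ps i))

/-- Expressiveness price `expr^∧` of conjuncts. -/
def exprC : Conjunct Act τ → Energy
  | .pos χ => exprE χ ⊔ onlyAt 5 (exprE χ 0)
  | .neg χ => (unitE 7 + exprE χ) ⊔ onlyAt 6 (exprE χ 0)
end

end Expr

/-! ### The weak spectroscopy energy game -/

/-- Positions of the weak spectroscopy game. -/
inductive GPos (Proc Act : Type) : Type
  | att (p : Proc) (Q : Set Proc)                                 -- `[p,Q]_a`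
  | attD (p : Proc) (Q : Set Proc)                                -- `[p,Q]^ε_a`
  | attC (p q : Proc)                                             -- `[p,q]^∧_a`
  | attB (p : Proc) (Q : Set Proc)                                -- `[p,Q]^η_a`
  | defC (p : Proc) (Q : Set Proc)                                -- `(p,Q)_d`
  | defS (p : Proc) (Q : Set Proc)                                -- `(p,Q)^s_d`
  | defB (p : Proc) (α : Act) (p' : Proc) (Q Qa : Set Proc)       -- `(p,α,p',Q,Qa)^η_d`

/-- The zero update. -/
def zeroU : Update := fun _ => UpdComp.zero

/-- The update `-ê_i`. -/
def decU (i : Fin 8) : Update := fun k => if k = i then UpdComp.decr else UpdComp.zero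

/-- The update `(min_{1,6},0,0,0,0,0,0,0)`. -/
def minU16 : Update := fun k => if k = 0 then UpdComp.minWith {5} else UpdComp.zero

/-- The update `(min_{1,7},0,0,0,0,0,0,-1)`. -/
def minU17dec8 : Update := fun k =>
  if k = 0 then UpdComp.minWith {6} else if k = 7 then UpdComp.decr else UpdComp.zero

/-- The update `(0,-1,-1,0,0,0,0,0)`. -/
def dec23 : Update := fun k => if k = 1 ∨ k = 2 then UpdComp.decr else UpdComp.zero

/-- The update `(min_{1,6},-1,-1,0,0,0,0,0)`. -/
def minU16dec23 : Update := fun k =>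
  if k = 0 then UpdComp.minWith {5}
  else if k = 1 ∨ k = 2 then UpdComp.decr else UpdComp.zero

section Game

variable {Proc Act : Type}

/-- Moves of the weak spectroscopy game. -/
inductive GMove (Tr : Proc → Act → Proc → Prop) (τ : Act) :
    GPos Proc Act → Update → GPos Proc Act → Prop
  | delay {p : Proc} {Q Q' : Set Proc} :
      SetStar Tr τ Q Q' →
      GMove Tr τ (.att p Q) zeroU (.attD p Q')
  | procrastination {p p' : Proc} {Q : Set Proc} :
      Tr p τ p' → p ≠ p' →
      GMove Tr τ (.attD p Q) zeroU (.attD p' Q)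
  | observation {p p' : Proc} {a : Act} {Q Q' : Set Proc} :
      Tr p a p' → a ≠ τ → SetStep Tr Q a Q' →
      GMove Tr τ (.attD p Q) (decU 0) (.att p' Q')
  | finishing {p : Proc} :
      GMove Tr τ (.att p ∅) zeroU (.defC p ∅)
  | immediateConj {p : Proc} {Q : Set Proc} :
      Q ≠ ∅ →
      GMove Tr τ (.att p Q) (decU 4) (.defC p Q)
  | lateConj {p : Proc} {Q : Set Proc} :
      GMove Tr τ (.attD p Q) zeroU (.defC p Q)
  | conjAnswer {p q : Proc} {Q : Set Proc} :
      q ∈ Q →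
      GMove Tr τ (.defC p Q) (decU 2) (.attC p q)
  | posConjunct {p q : Proc} {Q : Set Proc} :
      SetStar Tr τ {q} Q →
      GMove Tr τ (.attC p q) minU16 (.attD p Q)
  | negConjunct {p q : Proc} {Q : Set Proc} :
      SetStar Tr τ {p} Q → p ≠ q →
      GMove Tr τ (.attC p q) minU17dec8 (.attD q Q)
  | stableConj {p : Proc} {Q : Set Proc} :
      Stable Tr τ p →
      GMove Tr τ (.attD p Q) zeroU (.defS p {q ∈ Q | Stable Tr τ q})
  | conjStableAnswer {p q : Proc} {Q : Set Proc} :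
      q ∈ Q →
      GMove Tr τ (.defS p Q) (decU 3) (.attC p q)
  | stableFinishing {p : Proc} :
      GMove Tr τ (.defS p ∅) (decU 3) (.defC p ∅)
  | branchConj {p p' : Proc} {α : Act} {Q Qa : Set Proc} :
      OptStep Tr τ p α p' → Qa ⊆ Q →
      GMove Tr τ (.attD p Q) zeroU (.defB p α p' (Q \ Qa) Qa)
  | branchAnswer {p p' q : Proc} {α : Act} {Q Qa : Set Proc} :
      q ∈ Q →
      GMove Tr τ (.defB p α p' Q Qa) dec23 (.attC p q)
  | branchObservation {p p' : Proc} {α : Act} {Q Qa Q' : Set Proc} :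
      SetOpt Tr τ Qa α Q' →
      GMove Tr τ (.defB p α p' Q Qa) minU16dec23 (.attB p' Q')
  | branchAccounting {p : Proc} {Q : Set Proc} :
      GMove Tr τ (.attB p Q) (decU 0) (.att p Q)

/-- Defender positions of the weak spectroscopy game. -/
def isDefender : GPos Proc Act → Prop
  | .defC _ _ => True
  | .defS _ _ => True
  | .defB _ _ _ _ _ => True
  | _ => False

/-- The weak spectroscopy energy game `G△`. -/
def specGame (Tr : Proc → Act → Proc → Prop) (τ : Act) : EGame (GPos Proc Act) where
  defender := isDefender
  move := GMove Tr τ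

end Game

/-! ### Strategy formulas -/

section Strat

variable {Proc Act : Type}

mutual
/-- Attacker strategy formulas (formula sort). -/
inductive StratF (Tr : Proc → Act → Proc → Prop) (τ : Act) :
    GPos Proc Act → Energy → Formula Act τ → Prop
  | delay {p : Proc} {Q Q' : Set Proc} {u : Update} {e e' : Energy} {χ : DFormula Act τ} :
      GMove Tr τ (.att p Q) u (.attD p Q') →
      upd e u = some e' →
      (specGame Tr τ).Win (.attD p Q') e' →
      StratD Tr τ (.attD p Q') e' χ →
      StratF Tr τ (.att p Q) e (.delayed χ)
  | immediateConj {p : Proc} {Q : Set Proc} {u : Update} {e e' : Energy}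
      {I : Type} {ps : I → Conjunct Act τ} :
      GMove Tr τ (.att p Q) u (.defC p Q) →
      upd e u = some e' →
      (specGame Tr τ).Win (.defC p Q) e' →
      StratD Tr τ (.defC p Q) e' (.conj I ps) →
      StratF Tr τ (.att p Q) e (.conj I ps)

/-- Attacker strategy formulas (delayed-formula sort). -/
inductive StratD (Tr : Proc → Act → Proc → Prop) (τ : Act) :
    GPos Proc Act → Energy → DFormula Act τ → Prop
  | procrastination {p p' : Proc} {Q : Set Proc} {u : Update} {e e' : Energy}
      {χ : DFormula Act τ} :
      GMove Tr τ (.attD p Q) u (.attD p' Q) →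
      upd e u = some e' →
      (specGame Tr τ).Win (.attD p' Q) e' →
      StratD Tr τ (.attD p' Q) e' χ →
      StratD Tr τ (.attD p Q) e χ
  | observation {p p' : Proc} {a : Act} {Q Q' : Set Proc} {u : Update} {e e' : Energy}
      {φ : Formula Act τ} (ha : a ≠ τ) :
      GMove Tr τ (.attD p Q) u (.att p' Q') →
      Tr p a p' → SetStep Tr Q a Q' →
      upd e u = some e' →
      (specGame Tr τ).Win (.att p' Q') e' →
      StratF Tr τ (.att p' Q') e' φ →
      StratD Tr τ (.attD p Q) e (.obs a ha φ)
  | lateConj {p : Proc} {Q : Set Proc} {u : Update} {e e' : Energy} {χ : DFormula Act τ} :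
      GMove Tr τ (.attD p Q) u (.defC p Q) →
      upd e u = some e' →
      (specGame Tr τ).Win (.defC p Q) e' →
      StratD Tr τ (.defC p Q) e' χ →
      StratD Tr τ (.attD p Q) e χ
  | stable {p : Proc} {Q Q' : Set Proc} {u : Update} {e e' : Energy} {χ : DFormula Act τ} :
      GMove Tr τ (.attD p Q) u (.defS p Q') →
      upd e u = some e' →
      (specGame Tr τ).Win (.defS p Q') e' →
      StratD Tr τ (.defS p Q') e' χ →
      StratD Tr τ (.attD p Q) e χ
  | branch {p p' : Proc} {α : Act} {Q Q' Qa : Set Proc} {u : Update} {e e' : Energy}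
      {χ : DFormula Act τ} :
      GMove Tr τ (.attD p Q) u (.defB p α p' Q' Qa) →
      upd e u = some e' →
      (specGame Tr τ).Win (.defB p α p' Q' Qa) e' →
      StratD Tr τ (.defB p α p' Q' Qa) e' χ →
      StratD Tr τ (.attD p Q) e χ
  | conj {p : Proc} {Q : Set Proc} {e : Energy}
      (us : {q // q ∈ Q} → Update) (es : {q // q ∈ Q} → Energy)
      (ψs : {q // q ∈ Q} → Conjunct Act τ) :
      (∀ qq : {q // q ∈ Q}, GMove Tr τ (.defC p Q) (us qq) (.attC p qq.1)) →
      (∀ qq : {q // q ∈ Q}, upd e (us qq) = some (es qq)) →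
      (∀ qq : {q // q ∈ Q}, (specGame Tr τ).Win (.attC p qq.1) (es qq)) →
      (∀ qq : {q // q ∈ Q}, StratC Tr τ (.attC p qq.1) (es qq) (ψs qq)) →
      StratD Tr τ (.defC p Q) e (.conj {q // q ∈ Q} ψs)
  | stableConj {p : Proc} {Q : Set Proc} {e : Energy}
      (hne : Q.Nonempty)
      (us : {q // q ∈ Q} → Update) (es : {q // q ∈ Q} → Energy)
      (ψs : {q // q ∈ Q} → Conjunct Act τ) :
      (∀ qq : {q // q ∈ Q}, GMove Tr τ (.defS p Q) (us qq) (.attC p qq.1)) →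
      (∀ qq : {q // q ∈ Q}, upd e (us qq) = some (es qq)) →
      (∀ qq : {q // q ∈ Q}, (specGame Tr τ).Win (.attC p qq.1) (es qq)) →
      (∀ qq : {q // q ∈ Q}, StratC Tr τ (.attC p qq.1) (es qq) (ψs qq)) →
      StratD Tr τ (.defS p Q) e (.stableConj {q // q ∈ Q} ψs)
  | stableFinish {p : Proc} {u : Update} {e e' : Energy} :
      GMove Tr τ (.defS p ∅) u (.defC p ∅) →
      upd e u = some e' →
      (specGame Tr τ).Win (.defC p (∅ : Set Proc)) e' →
      StratD Tr τ (.defS p ∅) e (.stableConj Empty fun x => x.elim)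
  | branchConj {p p' : Proc} {α : Act} {Q Qa Q' : Set Proc} {ua ua' : Update}
      {e e1 ea : Energy} {φa : Formula Act τ}
      (us : {q // q ∈ Q} → Update) (es : {q // q ∈ Q} → Energy)
      (ψs : {q // q ∈ Q} → Conjunct Act τ) :
      GMove Tr τ (.defB p α p' Q Qa) ua (.attB p' Q') →
      GMove Tr τ (.attB p' Q') ua' (.att p' Q') →
      upd e ua = some e1 →
      upd e1 ua' = some ea →
      (specGame Tr τ).Win (.att p' Q') ea →
      StratF Tr τ (.att p' Q') ea φa →
      (∀ qq : {q // q ∈ Q}, GMove Tr τ (.defB p α p' Q Qa) (us qq) (.attC p qq.1)) →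
      (∀ qq : {q // q ∈ Q}, upd e (us qq) = some (es qq)) →
      (∀ qq : {q // q ∈ Q}, (specGame Tr τ).Win (.attC p qq.1) (es qq)) →
      (∀ qq : {q // q ∈ Q}, StratC Tr τ (.attC p qq.1) (es qq) (ψs qq)) →
      StratD Tr τ (.defB p α p' Q Qa) e (.branchConj α φa {q // q ∈ Q} ψs)

/-- Attacker strategy formulas (conjunct sort). -/
inductive StratC (Tr : Proc → Act → Proc → Prop) (τ : Act) :
    GPos Proc Act → Energy → Conjunct Act τ → Prop
  | pos {p q : Proc} {Q' : Set Proc} {u : Update} {e e' : Energy} {χ : DFormula Act τ} :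
      GMove Tr τ (.attC p q) u (.attD p Q') →
      upd e u = some e' →
      (specGame Tr τ).Win (.attD p Q') e' →
      StratD Tr τ (.attD p Q') e' χ →
      StratC Tr τ (.attC p q) e (.pos χ)
  | neg {p q : Proc} {P' : Set Proc} {u : Update} {e e' : Energy} {χ : DFormula Act τ} :
      GMove Tr τ (.attC p q) u (.attD q P') →
      upd e u = some e' →
      (specGame Tr τ).Win (.attD q P') e' →
      StratD Tr τ (.attD q P') e' χ →
      StratC Tr τ (.attC p q) e (.neg χ)
end

end Strat


/-! ### Auxiliary lemmas for the proof -/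

section ProofAux

variable {Proc Act : Type} {Tr : Proc → Act → Proc → Prop} {τ : Act}

/-- Total application of an update. -/
def applyU (e : Energy) (u : Update) : Energy := fun k =>
  match u k with
  | UpdComp.decr => e k - 1
  | UpdComp.zero => e k
  | UpdComp.minWith D => (insert k D).inf e

lemma upd_eq_some (e : Energy) (u : Update) (h : ∀ k, u k = UpdComp.decr → e k ≠ 0) :
    upd e u = some (applyU e u) := by
  rw [upd, if_pos h]; rfl

lemma upd_eq_some_iff {e : Energy} {u : Update} {e' : Energy} :
    upd e u = some e' ↔ (∀ k, u k = UpdComp.decr → e k ≠ 0) ∧ e' = applyU e u := by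
  constructor
  · intro h
    rw [upd] at h
    split at h
    · rename_i hc
      exact ⟨hc, by injection h with h'; exact h'.symm⟩
    · exact absurd h (by simp)
  · rintro ⟨h1, rfl⟩; exact upd_eq_some e u h1

lemma applyU_mono {e e' : Energy} (h : e ≤ e') (u : Update) : applyU e u ≤ applyU e' u := by
  intro k
  unfold applyU
  cases u k with
  | decr => exact tsub_le_tsub_right (h k) 1
  | zero => exact h k
  | minWith D => exact Finset.inf_mono_fun fun b _ => h b

lemma upd_cond_mono {e e' : Energy} (h : e ≤ e') {u : Update}
    (hc : ∀ k, u k = UpdComp.decr → e k ≠ 0) : ∀ k, u k = UpdComp.decr → e' k ≠ 0 := by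
  intro k hk
  have := hc k hk
  intro h0
  exact this (le_antisymm (h0 ▸ h k) zero_le)

/-- Attacker winning budgets are upward closed. -/
lemma win_mono {Pos : Type} {G : EGame Pos} {g : Pos} {e : Energy}
    (h : G.Win g e) : ∀ e', e ≤ e' → G.Win g e' := by
  induction h with
  | @attack g u g' e e1 hdef hmove hupd _ ih =>
      intro e' hle
      obtain ⟨hc, rfl⟩ := upd_eq_some_iff.mp hupd
      exact EGame.Win.attack hdef hmove (upd_eq_some e' u (upd_cond_mono hle hc))
        (ih _ (applyU_mono hle u))
  | @defend g e hdef hne _ ih =>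
      intro e' hle
      refine EGame.Win.defend hdef ?_ ?_
      · intro u g' hmove
        have hc : ∀ k, u k = UpdComp.decr → e k ≠ 0 := by
          by_contra hcon
          exact hne u g' hmove (by rw [upd, if_neg hcon])
        rw [upd_eq_some e' u (upd_cond_mono hle hc)]
        simp
      · intro u g' e1' hmove hupd'
        have hc : ∀ k, u k = UpdComp.decr → e k ≠ 0 := by
          by_contra hcon
          exact hne u g' hmove (by rw [upd, if_neg hcon])
        obtain ⟨_, rfl⟩ := upd_eq_some_iff.mp hupd'
        exact ih u g' (applyU e u) hmove (upd_eq_some e u hc) _ (applyU_mono hle u)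

lemma upd_zeroU (e : Energy) : upd e zeroU = some e := by
  rw [upd_eq_some e zeroU (by intro k hk; simp [zeroU] at hk)]
  congr 1

lemma applyU_zeroU (e : Energy) : applyU e zeroU = e := rfl

lemma upd_zeroU' (e : Energy) : upd e zeroU = some (applyU e zeroU) :=
  upd_eq_some e zeroU (by intro k hk; simp [zeroU] at hk)

lemma decU_cond {e : Energy} (i : Fin 8) (h : e i ≠ 0) :
    ∀ k, decU i k = UpdComp.decr → e k ≠ 0 := by
  intro k hk
  rw [decU] at hk
  split at hk
  · rename_i h'; rw [h']; exact h
  · exact absurd hk (by simp)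

lemma applyU_decU (e : Energy) (i : Fin 8) :
    applyU e (decU i) = fun k => if k = i then e k - 1 else e k := by
  funext k
  by_cases hk : k = i <;> simp [applyU, decU, hk]

lemma one_add_le_tsub {T e : ℕ∞} (h : 1 + T ≤ e) : T ≤ e - 1 := ENat.le_sub_of_add_le_left (by simp) h

/-- If `e ≥ ê_i + T` then the `-ê_i` update is defined on `e` and the result dominates `T`. -/
lemma dec_of_unit_le {T e : Energy} (i : Fin 8) (h : unitE i + T ≤ e) :
    e i ≠ 0 ∧ T ≤ applyU e (decU i) := by
  have hi : 1 + T i ≤ e i := by have := h i; simpa [unitE] using this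
  constructor
  · intro h0
    rw [h0] at hi
    simp at hi
  · rw [applyU_decU]
    intro k
    by_cases hk : k = i
    · subst hk; simpa using one_add_le_tsub hi
    · have := h k; simp [unitE, hk] at this ⊢; exact this

lemma upd_minU16 (e : Energy) :
    upd e minU16 = some (applyU e minU16) := by
  refine upd_eq_some e minU16 ?_
  intro k hk
  rw [minU16] at hk
  split at hk <;> simp_all

lemma applyU_minU16 (e : Energy) :
    applyU e minU16 = fun k => if k = 0 then e 0 ⊓ e 5 else e k := by
  funext k
  by_cases hk : k = 0 <;> simp [applyU, minU16, hk]

lemma upd_minU17dec8 (e : Energy) (h : e 7 ≠ 0) :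
    upd e minU17dec8 = some (applyU e minU17dec8) := by
  refine upd_eq_some e minU17dec8 ?_
  intro k hk
  rw [minU17dec8] at hk
  split at hk
  · simp_all
  · split at hk
    · rename_i h7; rw [h7]; exact h
    · simp_all

lemma applyU_minU17dec8 (e : Energy) :
    applyU e minU17dec8 =
      fun k => if k = 0 then e 0 ⊓ e 6 else if k = 7 then e k - 1 else e k := by
  funext k
  by_cases hk : k = 0
  · simp [applyU, minU17dec8, hk]
  · by_cases hk7 : k = 7 <;> simp [applyU, minU17dec8, hk, hk7]

lemma dec23_cond {e : Energy} (h1 : e 1 ≠ 0) (h2 : e 2 ≠ 0) :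
    ∀ k, dec23 k = UpdComp.decr → e k ≠ 0 := by
  intro k hk
  rw [dec23] at hk
  split at hk
  · rename_i h'; rcases h' with h' | h' <;> (rw [h']; assumption)
  · simp_all

lemma applyU_dec23 (e : Energy) :
    applyU e dec23 = fun k => if k = 1 ∨ k = 2 then e k - 1 else e k := by
  funext k
  by_cases hk : k = 1 ∨ k = 2 <;> simp only [applyU, dec23, hk, if_true, if_false]

lemma minU16dec23_cond {e : Energy} (h1 : e 1 ≠ 0) (h2 : e 2 ≠ 0) :
    ∀ k, minU16dec23 k = UpdComp.decr → e k ≠ 0 := by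
  intro k hk
  rw [minU16dec23] at hk
  split at hk
  · simp_all
  · split at hk
    · rename_i h'; rcases h' with h' | h' <;> (rw [h']; assumption)
    · simp_all

lemma applyU_minU16dec23 (e : Energy) :
    applyU e minU16dec23 =
      fun k => if k = 0 then e 0 ⊓ e 5 else if k = 1 ∨ k = 2 then e k - 1 else e k := by
  funext k
  by_cases hk : k = 0
  · simp [applyU, minU16dec23, hk]
  · by_cases hk' : k = 1 ∨ k = 2 <;>
      simp only [applyU, minU16dec23, hk, hk', if_true, if_false]

/-- Defender cannot move from `(p,∅)_d`, so the attacker wins with any budget. -/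
lemma win_defC_empty (p : Proc) (e : Energy) :
    (specGame Tr τ).Win (.defC p (∅ : Set Proc)) e := by
  refine EGame.Win.defend trivial ?_ ?_
  · intro u g' hmove; cases hmove; rename_i hq; cases hq
  · intro u g' e' hmove; cases hmove; rename_i hq; cases hq

/-- Procrastination: the attacker can silently follow `p ↠ p'` at delayed positions. -/
lemma win_attD_of_star {p p' : Proc} {Q : Set Proc} {e : Energy}
    (hstar : Star Tr τ p p') (h : (specGame Tr τ).Win (.attD p' Q) e) :
    (specGame Tr τ).Win (.attD p Q) e := by
  induction hstar using Relation.ReflTransGen.head_induction_on with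
  | refl => exact h
  | head hstep _ ih =>
      rename_i a b _
      by_cases hab : a = b
      · exact hab ▸ ih
      · exact EGame.Win.attack (fun hf => hf)
          (GMove.procrastination hstep hab) (upd_zeroU e) ih

/-- Winning the standard conjunction defender position. -/
lemma win_defC_of (p : Proc) (Q : Set Proc) (S : Energy)
    (h : ∀ q ∈ Q, (specGame Tr τ).Win (.attC p q) S) :
    (specGame Tr τ).Win (.defC p Q) (unitE 2 + S) := by
  have hd := dec_of_unit_le (T := S) 2 le_rfl
  refine EGame.Win.defend trivial ?_ ?_
  · intro u g' hmove
    cases hmove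
    rw [upd_eq_some _ _ (decU_cond 2 hd.1)]
    simp
  · intro u g' e' hmove hupd
    cases hmove with
    | conjAnswer hq =>
        obtain ⟨_, rfl⟩ := upd_eq_some_iff.mp hupd
        exact win_mono (h _ hq) _ hd.2

/-- Winning the stable conjunction defender position. -/
lemma win_defS_of (p : Proc) (Q : Set Proc) (S : Energy)
    (h : ∀ q ∈ Q, (specGame Tr τ).Win (.attC p q) S) :
    (specGame Tr τ).Win (.defS p Q) (unitE 3 + S) := by
  have hd := dec_of_unit_le (T := S) 3 le_rfl
  refine EGame.Win.defend trivial ?_ ?_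
  · intro u g' hmove
    cases hmove with
    | conjStableAnswer hq => rw [upd_eq_some _ _ (decU_cond 3 hd.1)]; simp
    | stableFinishing => rw [upd_eq_some _ _ (decU_cond 3 hd.1)]; simp
  · intro u g' e' hmove hupd
    cases hmove with
    | conjStableAnswer hq =>
        obtain ⟨_, rfl⟩ := upd_eq_some_iff.mp hupd
        exact win_mono (h _ hq) _ hd.2
    | stableFinishing =>
        exact win_defC_empty p _

/-- Winning the branching conjunction defender position. -/
lemma win_defB_of (p pp : Proc) (α : Act) (Q Qa : Set Proc) (B : Energy)
    (hans : ∀ q ∈ Q, (specGame Tr τ).Win (.attC p q) B)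
    (hobs : ∀ Q', SetOpt Tr τ Qa α Q' →
      (specGame Tr τ).Win (.attB pp Q') (fun k => if k = 0 then B 0 ⊓ B 5 else B k)) :
    (specGame Tr τ).Win (.defB p α pp Q Qa) ((unitE 1 + unitE 2) + B) := by
  have h1 : ((unitE 1 + unitE 2) + B) 1 ≠ 0 := by simp [unitE]
  have h2 : ((unitE 1 + unitE 2) + B) 2 ≠ 0 := by simp [unitE]
  refine EGame.Win.defend trivial ?_ ?_
  · intro u g' hmove
    cases hmove with
    | branchAnswer hq => rw [upd_eq_some _ _ (dec23_cond h1 h2)]; simp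
    | branchObservation hQ' => rw [upd_eq_some _ _ (minU16dec23_cond h1 h2)]; simp
  · intro u g' e' hmove hupd
    cases hmove with
    | branchAnswer hq =>
        obtain ⟨_, rfl⟩ := upd_eq_some_iff.mp hupd
        refine win_mono (hans _ hq) _ ?_
        rw [applyU_dec23]
        intro k
        beta_reduce
        by_cases hk : k = 1 ∨ k = 2
        · rw [if_pos hk]
          refine one_add_le_tsub ?_
          rcases hk with rfl | rfl <;> simp [unitE]
        · rw [if_neg hk]
          exact le_add_self
    | branchObservation hQ' =>
        obtain ⟨_, rfl⟩ := upd_eq_some_iff.mp hupd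
        refine win_mono (hobs _ hQ') _ ?_
        rw [applyU_minU16dec23]
        intro k
        beta_reduce
        by_cases hk0 : k = 0
        · subst hk0
          simp [unitE]
        · simp only [if_neg hk0]
          by_cases hk : k = 1 ∨ k = 2
          · rw [if_pos hk]
            refine one_add_le_tsub ?_
            rcases hk with rfl | rfl <;> simp [unitE]
          · rw [if_neg hk]
            exact le_add_self

end ProofAux

section Claims

variable {Proc Act : Type} {Tr : Proc → Act → Proc → Prop} {τ : Act}

mutual

/-- If `φ` distinguishes `p` from `Q`, the attacker wins `[p,Q]_a` with `expr φ`. -/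
theorem claimF : ∀ (φ : Formula Act τ) (p : Proc) (Q : Set Proc),
    Sat Tr τ p φ → (∀ q ∈ Q, ¬ Sat Tr τ q φ) →
    (specGame Tr τ).Win (.att p Q) (exprF φ)
  | Formula.delayed χ, p, Q, hp, hQ => by
    simp only [Sat] at hp
    obtain ⟨p', hpp', hp'⟩ := hp
    simp only [exprF]
    refine EGame.Win.attack (fun h => h)
      (GMove.delay (Q' := {q' | ∃ q ∈ Q, Star Tr τ q q'}) rfl) (upd_zeroU _) ?_
    refine claimD χ p p' _ hpp' hp' ?_
    rintro q' ⟨q, hqQ, hstar⟩ hsat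
    exact hQ q hqQ (by simp only [Sat]; exact ⟨q', hstar, hsat⟩)
  | Formula.conj I ps, p, Q, hp, hQ => by
    by_cases hQe : Q = ∅
    · subst hQe
      exact EGame.Win.attack (fun h => h) GMove.finishing (upd_zeroU _) (win_defC_empty p _)
    · obtain ⟨q₀, hq₀⟩ := Set.nonempty_iff_ne_empty.mpr hQe
      simp only [Sat] at hp
      have hex : ∀ q ∈ Q, ∃ i, ¬ SatC Tr τ q (ps i) := by
        intro q hq
        have := hQ q hq
        simp only [Sat] at this
        push_neg at this
        exact this
      obtain ⟨i₀, -⟩ := hex q₀ hq₀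
      haveI : Nonempty I := ⟨i₀⟩
      have hexpr : exprF (Formula.conj I ps) =
          (unitE 4 + unitE 2) + ⨆ i, exprC (ps i) := by
        simp only [exprF]; exact iSup_pos ‹Nonempty I›
      rw [hexpr]
      have h4 := dec_of_unit_le (T := unitE 2 + ⨆ i, exprC (ps i)) 4
        (le_of_eq (add_assoc _ _ _).symm)
      refine EGame.Win.attack (fun h => h) (GMove.immediateConj hQe)
        (upd_eq_some _ _ (decU_cond 4 h4.1)) ?_
      refine win_mono (win_defC_of p Q _ ?_) _ h4.2
      intro q hq
      obtain ⟨i, hi⟩ := hex q hq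
      exact win_mono (claimC (ps i) p q (hp i) hi) _ (le_iSup (fun i => exprC (ps i)) i)

/-- If `p ↠ p'` and `χ` distinguishes `p'` from `Q` (w.r.t. `⟦·⟧^ε`), the
attacker wins `[p,Q]^ε_a` with `expr^ε χ`. -/
theorem claimD : ∀ (χ : DFormula Act τ) (p p' : Proc) (Q : Set Proc),
    Star Tr τ p p' → SatD Tr τ p' χ → (∀ q ∈ Q, ¬ SatD Tr τ q χ) →
    (specGame Tr τ).Win (.attD p Q) (exprE χ)
  | DFormula.obs a ha φ, p, p', Q, hstar, hp', hQ => by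
    simp only [SatD] at hp'
    obtain ⟨p'', hstep, hsat⟩ := hp'
    refine win_attD_of_star hstar ?_
    simp only [exprE]
    have h0 := dec_of_unit_le (T := exprF φ) 0 le_rfl
    refine EGame.Win.attack (fun h => h)
      (GMove.observation (Q' := {q' | ∃ q ∈ Q, Tr q a q'}) hstep ha rfl)
      (upd_eq_some _ _ (decU_cond 0 h0.1)) ?_
    refine win_mono (claimF φ p'' _ hsat ?_) _ h0.2
    rintro q' ⟨q, hqQ, hq'⟩ hsatq'
    exact hQ q hqQ (by simp only [SatD]; exact ⟨q', hq', hsatq'⟩)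
  | DFormula.conj I ps, p, p', Q, hstar, hp', hQ => by
    by_cases hQe : Q = ∅
    · subst hQe
      exact EGame.Win.attack (fun h => h) GMove.lateConj (upd_zeroU _) (win_defC_empty p _)
    · obtain ⟨q₀, hq₀⟩ := Set.nonempty_iff_ne_empty.mpr hQe
      simp only [SatD] at hp'
      have hex : ∀ q ∈ Q, ∃ i, ¬ SatC Tr τ q (ps i) := by
        intro q hq
        have := hQ q hq
        simp only [SatD] at this
        push_neg at this
        exact this
      obtain ⟨i₀, -⟩ := hex q₀ hq₀
      haveI : Nonempty I := ⟨i₀⟩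
      have hexpr : exprE (DFormula.conj I ps) = unitE 2 + ⨆ i, exprC (ps i) := by
        simp only [exprE]; exact iSup_pos ‹Nonempty I›
      rw [hexpr]
      refine win_attD_of_star hstar ?_
      refine EGame.Win.attack (fun h => h) GMove.lateConj (upd_zeroU _) ?_
      refine win_defC_of p' Q _ ?_
      intro q hq
      obtain ⟨i, hi⟩ := hex q hq
      exact win_mono (claimC (ps i) p' q (hp' i) hi) _ (le_iSup (fun i => exprC (ps i)) i)
  | DFormula.stableConj I ps, p, p', Q, hstar, hp', hQ => by
    simp only [SatD] at hp'
    obtain ⟨hstable, hsat⟩ := hp'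
    refine win_attD_of_star hstar ?_
    simp only [exprE]
    refine EGame.Win.attack (fun h => h) (GMove.stableConj hstable) (upd_zeroU _) ?_
    refine win_defS_of p' _ _ ?_
    rintro q ⟨hqQ, hqs⟩
    have hnq := hQ q hqQ
    simp only [SatD] at hnq
    have : ¬ ∀ i, SatC Tr τ q (ps i) := fun hall => hnq ⟨hqs, hall⟩
    push_neg at this
    obtain ⟨i, hi⟩ := this
    exact win_mono (claimC (ps i) p' q (hsat i) hi) _ (le_iSup (fun i => exprC (ps i)) i)
  | DFormula.branchConj α φ I ps, p, p', Q, hstar, hp', hQ => by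
    simp only [SatD] at hp'
    obtain ⟨⟨p'', hstep, hφ⟩, hsat⟩ := hp'
    refine win_attD_of_star hstar ?_
    simp only [exprE]
    refine EGame.Win.attack (fun h => h)
      (GMove.branchConj (p' := p'') (Qa := {q ∈ Q | ∀ i, SatC Tr τ q (ps i)})
        hstep (Set.sep_subset _ _)) (upd_zeroU _) ?_
    refine win_defB_of p' p'' α _ _ _ ?_ ?_
    · rintro q ⟨hqQ, hqn⟩
      have : ¬ ∀ i, SatC Tr τ q (ps i) := fun hall => hqn ⟨hqQ, hall⟩
      push_neg at this
      obtain ⟨i, hi⟩ := this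
      refine win_mono (claimC (ps i) p' q (hsat i) hi) _ ?_
      exact (le_iSup (fun i => exprC (ps i)) i).trans le_sup_right
    · intro Q' hQ'
      have hXB : unitE 0 + exprF φ ≤
          ((unitE 0 + exprF φ) ⊔ onlyAt 5 (1 + exprF φ 0)) ⊔ ⨆ i, exprC (ps i) :=
        le_sup_left.trans le_sup_left
      set B : Energy := ((unitE 0 + exprF φ) ⊔ onlyAt 5 (1 + exprF φ 0)) ⊔ ⨆ i, exprC (ps i)
        with hB
      have hle : unitE 0 + exprF φ ≤ fun k => if k = 0 then B 0 ⊓ B 5 else B k := by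
        intro k
        beta_reduce
        by_cases hk : k = 0
        · subst hk
          simp only [if_pos rfl]
          refine le_inf (hXB 0) ?_
          have h5 : (unitE 0 + exprF φ) 0 = onlyAt 5 (1 + exprF φ 0) 5 := by
            simp [unitE, onlyAt]
          rw [h5, hB]
          exact le_sup_of_le_left le_sup_right
        · rw [if_neg hk]
          exact hXB k
      have h0 := dec_of_unit_le 0 hle
      refine EGame.Win.attack (fun h => h) GMove.branchAccounting
        (upd_eq_some _ _ (decU_cond 0 h0.1)) ?_
      refine win_mono (claimF φ p'' Q' hφ ?_) _ h0.2
      intro q'' hq'' hsatq''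
      rw [hQ'] at hq''
      obtain ⟨q, ⟨hqQ, hqAll⟩, hstepq⟩ := hq''
      exact hQ q hqQ (by simp only [SatD]; exact ⟨⟨q'', hstepq, hsatq''⟩, hqAll⟩)

/-- If `ψ` distinguishes `p` from `q` (w.r.t. `⟦·⟧^∧`), the attacker wins
`[p,q]^∧_a` with `expr^∧ ψ`. -/
theorem claimC : ∀ (ψ : Conjunct Act τ) (p q : Proc),
    SatC Tr τ p ψ → ¬ SatC Tr τ q ψ →
    (specGame Tr τ).Win (.attC p q) (exprC ψ)
  | Conjunct.pos χ, p, q, hpψ, hqψ => by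
    simp only [SatC] at hpψ hqψ
    obtain ⟨p1, hpp1, hp1⟩ := hpψ
    simp only [exprC]
    set x : Energy := exprE χ with hx
    refine EGame.Win.attack (fun h => h)
      (GMove.posConjunct (Q := {q' | ∃ y ∈ ({q} : Set Proc), Star Tr τ y q'}) rfl)
      (upd_minU16 _) ?_
    rw [applyU_minU16]
    refine win_mono (claimD χ p p1 _ hpp1 hp1 ?_) _ ?_
    · rintro q' ⟨y, hy, hstar⟩ hsat
      rw [Set.mem_singleton_iff] at hy
      subst hy
      exact hqψ ⟨q', hstar, hsat⟩
    · intro k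
      beta_reduce
      by_cases hk : k = 0
      · subst hk
        simp only [if_pos rfl, Pi.sup_apply, onlyAt]
        simp only [show ((0 : Fin 8) = 5) = False by simp, if_false, if_pos rfl]
        refine le_inf ?_ le_sup_right
        rw [sup_of_le_left zero_le]
      · rw [if_neg hk]
        exact Pi.le_def.mp le_sup_left k
  | Conjunct.neg χ, p, q, hpψ, hqψ => by
    simp only [SatC] at hpψ hqψ
    rw [not_not] at hqψ
    obtain ⟨q1, hqq1, hq1⟩ := hqψ
    have hpq : p ≠ q := by rintro rfl; exact hpψ ⟨q1, hqq1, hq1⟩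
    simp only [exprC]
    set x : Energy := exprE χ with hx
    have h7 : ((unitE 7 + x) ⊔ onlyAt 6 (x 0)) 7 ≠ 0 := by
      simp [unitE, onlyAt]
    refine EGame.Win.attack (fun h => h)
      (GMove.negConjunct (Q := {q' | ∃ y ∈ ({p} : Set Proc), Star Tr τ y q'}) rfl hpq)
      (upd_minU17dec8 _ h7) ?_
    rw [applyU_minU17dec8]
    refine win_mono (claimD χ q q1 _ hqq1 hq1 ?_) _ ?_
    · rintro q' ⟨y, hy, hstar⟩ hsat
      rw [Set.mem_singleton_iff] at hy
      subst hy
      exact hpψ ⟨q', hstar, hsat⟩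
    · intro k
      beta_reduce
      by_cases hk : k = 0
      · subst hk
        simp only [if_pos rfl, Pi.sup_apply, Pi.add_apply, unitE, onlyAt]
        simp only [show ((0 : Fin 8) = 7) = False by simp,
          show ((0 : Fin 8) = 6) = False by simp,
          show ((6 : Fin 8) = 7) = False by simp,
          show ((6 : Fin 8) = 6) = True by simp, if_false, if_true]
        rw [zero_add, sup_of_le_left zero_le]
        exact le_inf le_rfl le_sup_right
      · by_cases hk7 : k = 7
        · subst hk7
          simp only [if_neg hk, if_pos rfl]
          refine one_add_le_tsub ?_
          have : (1 : ℕ∞) + x 7 = (unitE 7 + x) 7 := by simp [unitE]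
          rw [this]
          exact le_sup_left
        · rw [if_neg hk, if_neg hk7]
          refine le_trans ?_ (Pi.le_def.mp (le_sup_left (a := unitE 7 + x) (b := onlyAt 6 (x 0))) k)
          simp [unitE, hk7]
          exact le_rfl

end

end Claims

/-- if a conjunction `⋀Ψ` distinguishes `p` from nonempty `Q`
(w.r.t. `⟦·⟧^ε`), then `expr^ε(⋀Ψ)` is attacker-winning at `(p,Q)_d`. -/
theorem distinction_price_in_win_conjunction {Proc Act : Type}
    (Tr : Proc → Act → Proc → Prop) (τ : Act)
    (I : Type) (ps : I → Conjunct Act τ) (p : Proc) (Q : Set Proc)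
    (hQ : Q.Nonempty)
    (h : DistinguishesD Tr τ (DFormula.conj I ps) p Q) :
    (specGame Tr τ).Win (.defC p Q) (exprE (DFormula.conj I ps)) := by
  obtain ⟨hp, hQd⟩ := h
  obtain ⟨q₀, hq₀⟩ := hQ
  simp only [SatD] at hp
  have hex : ∀ q ∈ Q, ∃ i, ¬ SatC Tr τ q (ps i) := by
    intro q hq
    have := hQd q hq
    simp only [SatD] at this
    push_neg at this
    exact this
  obtain ⟨i₀, -⟩ := hex q₀ hq₀
  haveI : Nonempty I := ⟨i₀⟩
  have hexpr : exprE (DFormula.conj I ps) = unitE 2 + ⨆ i, exprC (ps i) := by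
    simp only [exprE]; exact iSup_pos ‹Nonempty I›
  rw [hexpr]
  refine win_defC_of p Q _ ?_
  intro q hq
  obtain ⟨i, hi⟩ := hex q hq
  exact win_mono (claimC (ps i) p q (hp i) hi) _ (le_iSup (fun i => exprC (ps i)) i)

end Spectroscopy
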